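/- arXiv:0808.3247 — 2 statements merged into one kernel-verified Lean document; each statement's English description precedes it below -/
import Mathlib

section
/- Theorem 1 (entropy bound in Bilateral Grand Lebesgue norm). Let ψ, ν, ζ ∈ Ψ(a,b) with ζ(p) = ψ(p)·ν(p) for all p ∈ (a,b). Let T be a countable set and for each t ∈ T let Y(t) : X → ℝ be measurable with ‖Y(t)‖_{G(ψ)} < ∞; write d_ψ(t,s) = ‖Y(t) − Y(s)‖_{G(ψ)}. Let θ ∈ (0,1) and suppose (F_k)_{k≥0} is a nondecreasing sequence of finite subsets of T with ⋃_k F_k = T, F_0 = {t_0}, card(F_k) = N_k, and such that for every k ≥ 0 the set F_k is a θ^k-net of (T, d_ψ). Then ‖sup_{t∈T} Y(t)‖_{G(ζ)} ≤ ‖Y(t_0)‖_{G(ψ)} + Σ_{k=1}^∞ θ^{k−1} φ_ν(N_k), where φ_ν(m) = sup_{p∈(a,b)} m^{1/p}/ν(p) and sup_{t∈T} Y(t) denotes the pointwise supremum. -/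
open MeasureTheory ENNReal Set

noncomputable section

/-- The set of exponents p with a < p and p < b (b may be infinite). -/
def expSet (a : ℝ) (b : ℝ≥0∞) : Set ℝ := {p : ℝ | a < p ∧ ENNReal.ofReal p < b}

/-- The class Ψ(a,b). -/
structure IsPsi (a : ℝ) (b : ℝ≥0∞) (ψ : ℝ → ℝ) : Prop where
  one_le : ∀ p ∈ expSet a b, 1 ≤ ψ p
  bddOnCompacts : ∀ c d : ℝ, c ∈ expSet a b → d ∈ expSet a b → BddAbove (ψ '' Set.Icc c d)
  logConvex : ConvexOn ℝ (expSet a b) fun p => Real.log (ψ p)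

/-- L^p norm (real exponent). -/
def lpNorm {X : Type*} [MeasurableSpace X] (μ : Measure X) (f : X → ℝ) (p : ℝ) : ℝ≥0∞ :=
  (∫⁻ x, ENNReal.ofReal (|f x| ^ p) ∂μ) ^ (1 / p)

/-- Bilateral Grand Lebesgue norm. -/
def glNorm {X : Type*} [MeasurableSpace X] (μ : Measure X) (a : ℝ) (b : ℝ≥0∞) (ψ : ℝ → ℝ)
    (f : X → ℝ) : ℝ≥0∞ :=
  ⨆ p ∈ expSet a b, lpNorm μ f p / ENNReal.ofReal (ψ p)

/-- L^p norm for extended-real-valued functions. -/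
def lpNormE {X : Type*} [MeasurableSpace X] (μ : Measure X) (g : X → EReal) (p : ℝ) : ℝ≥0∞ :=
  (∫⁻ x, (g x).abs ^ p ∂μ) ^ (1 / p)

/-- Bilateral Grand Lebesgue norm for extended-real-valued functions. -/
def glNormE {X : Type*} [MeasurableSpace X] (μ : Measure X) (a : ℝ) (b : ℝ≥0∞) (ψ : ℝ → ℝ)
    (g : X → EReal) : ℝ≥0∞ :=
  ⨆ p ∈ expSet a b, lpNormE μ g p / ENNReal.ofReal (ψ p)

/-- L^p norm for `ℝ≥0∞`-valued functions. -/
def lpNormNN {X : Type*} [MeasurableSpace X] (μ : Measure X) (g : X → ℝ≥0∞) (p : ℝ) : ℝ≥0∞ :=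
  (∫⁻ x, g x ^ p ∂μ) ^ (1 / p)

end


private lemma lp_sum_le {X : Type*} [MeasurableSpace X] (μ : Measure X) {ι : Type*}
    (s : Finset ι) (h : ι → X → ℝ≥0∞) (hm : ∀ i, Measurable (h i)) {p : ℝ} (hp : 1 ≤ p) :
    (∫⁻ x, (∑ i ∈ s, h i x) ^ p ∂μ) ^ (1/p) ≤ ∑ i ∈ s, (∫⁻ x, h i x ^ p ∂μ) ^ (1/p) := by
  classical
  have hp0 : 0 < p := lt_of_lt_of_le one_pos hp
  induction s using Finset.cons_induction with
  | empty =>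
      simp [ENNReal.zero_rpow_of_pos hp0, ENNReal.zero_rpow_of_pos (by positivity : (0:ℝ) < 1/p), hp0]
  | cons i s his ih =>
      simp only [Finset.sum_cons]
      calc (∫⁻ x, (h i x + ∑ j ∈ s, h j x) ^ p ∂μ) ^ (1/p)
          ≤ (∫⁻ x, h i x ^ p ∂μ) ^ (1/p) + (∫⁻ x, (∑ j ∈ s, h j x) ^ p ∂μ) ^ (1/p) := by
            have := ENNReal.lintegral_Lp_add_le (μ := μ) (hm i).aemeasurable
              (Finset.measurable_sum s (fun j _ => hm j)).aemeasurable hp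
            simpa using this
        _ ≤ (∫⁻ x, h i x ^ p ∂μ) ^ (1/p) + ∑ j ∈ s, (∫⁻ x, h j x ^ p ∂μ) ^ (1/p) :=
            add_le_add_right ih _

private lemma lp_tsum_le {X : Type*} [MeasurableSpace X] (μ : Measure X)
    (h : ℕ → X → ℝ≥0∞) (hm : ∀ n, Measurable (h n)) {p : ℝ} (hp : 1 ≤ p) :
    (∫⁻ x, (∑' n, h n x) ^ p ∂μ) ^ (1/p) ≤ ∑' n, (∫⁻ x, h n x ^ p ∂μ) ^ (1/p) := by
  have hp0 : 0 < p := lt_of_lt_of_le one_pos hp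
  have hps : (0:ℝ) < 1/p := by positivity
  set s : ℕ → X → ℝ≥0∞ := fun n x => ∑ k ∈ Finset.range n, h k x with hs
  have hmono : Monotone s := fun n m hnm x =>
    Finset.sum_le_sum_of_subset (Finset.range_subset_range.2 hnm)
  have key : (∫⁻ x, (∑' n, h n x) ^ p ∂μ) = ⨆ n, ∫⁻ x, s n x ^ p ∂μ := by
    rw [← lintegral_iSup (fun n => (Finset.measurable_sum _ (fun k _ => hm k)).pow_const p)
      (fun n m hnm x => ENNReal.rpow_le_rpow (hmono hnm x) hp0.le)]
    congr 1; funext x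
    rw [ENNReal.tsum_eq_iSup_nat]
    exact (ENNReal.orderIsoRpow p hp0).map_iSup _
  rw [key]
  have hiso : (⨆ n, ∫⁻ x, s n x ^ p ∂μ) ^ (1/p) = ⨆ n, (∫⁻ x, s n x ^ p ∂μ) ^ (1/p) :=
    (ENNReal.orderIsoRpow (1/p) hps).map_iSup _
  rw [hiso]
  apply iSup_le; intro n
  calc (∫⁻ x, s n x ^ p ∂μ) ^ (1/p)
      ≤ ∑ k ∈ Finset.range n, (∫⁻ x, h k x ^ p ∂μ) ^ (1/p) :=
        lp_sum_le μ _ h hm hp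
    _ ≤ ∑' k, (∫⁻ x, h k x ^ p ∂μ) ^ (1/p) := ENNReal.sum_le_tsum _

private lemma abs_iSup_le {ι : Type*} [Nonempty ι] (y : ι → ℝ) :
    (⨆ i, ((y i : ℝ) : EReal)).abs ≤ ⨆ i, ENNReal.ofReal |y i| := by
  set c := ⨆ i, ENNReal.ofReal |y i| with hc
  rcases eq_or_ne c ⊤ with hct | hct
  · simp [hct]
  · have hb : ∀ i, |y i| ≤ c.toReal := fun i =>
      (ENNReal.ofReal_le_iff_le_toReal hct).1 (le_iSup (fun i => ENNReal.ofReal |y i|) i)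
    set S := ⨆ i, ((y i : ℝ) : EReal) with hS
    have hStop : S ≤ ((c.toReal : ℝ) : EReal) := iSup_le fun i => by
      exact_mod_cast le_of_abs_le (hb i)
    obtain ⟨i₀⟩ := ‹Nonempty ι›
    have hSbot : ((-c.toReal : ℝ) : EReal) ≤ S := by
      refine le_trans ?_ (le_iSup (fun i => ((y i : ℝ) : EReal)) i₀)
      exact_mod_cast neg_le_of_abs_le (hb i₀)
    have hne_top : S ≠ ⊤ := (hStop.trans_lt (EReal.coe_lt_top _)).ne
    have hne_bot : S ≠ ⊥ := fun hbot => by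
      rw [hbot] at hSbot; exact (EReal.bot_lt_coe _).not_ge hSbot
    rw [← EReal.coe_toReal hne_top hne_bot, EReal.abs_def, ← ENNReal.ofReal_toReal hct]
    apply ENNReal.ofReal_le_ofReal
    rw [abs_le]
    constructor
    · rw [← EReal.coe_toReal hne_top hne_bot] at hSbot
      exact_mod_cast hSbot
    · rw [← EReal.coe_toReal hne_top hne_bot] at hStop
      exact_mod_cast hStop

/-- Theorem 1 (entropy bound in Bilateral Grand Lebesgue norm). -/
theorem entropy_bound_BGL
    {X : Type*} [MeasurableSpace X] (μ : Measure X) [SigmaFinite μ]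
    (a : ℝ) (b : ℝ≥0∞) (ha : 1 ≤ a) (hab : ENNReal.ofReal a < b)
    (ψ ν ζ : ℝ → ℝ) (hψ : IsPsi a b ψ) (hν : IsPsi a b ν) (hζ : IsPsi a b ζ)
    (hmul : ∀ p ∈ expSet a b, ζ p = ψ p * ν p)
    (T : Type*) [Countable T]
    (Y : T → X → ℝ) (hYmeas : ∀ t, Measurable (Y t))
    (hYfin : ∀ t, glNorm μ a b ψ (Y t) < ⊤)
    (θ : ℝ) (hθ0 : 0 < θ) (hθ1 : θ < 1)
    (F : ℕ → Finset T) (hFmono : Monotone F)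
    (hcover : ∀ t, ∃ k, t ∈ F k)
    (t₀ : T) (hF0 : F 0 = {t₀})
    (hnet : ∀ k : ℕ, ∀ t : T, ∃ s ∈ F k,
      glNorm μ a b ψ (fun x => Y t x - Y s x) ≤ ENNReal.ofReal (θ ^ k)) :
    glNormE μ a b ζ (fun x => ⨆ t, (Y t x : EReal)) ≤
      glNorm μ a b ψ (Y t₀) +
        ∑' k : ℕ, ENNReal.ofReal (θ ^ k) *
          ⨆ p ∈ expSet a b, ((F (k + 1)).card : ℝ≥0∞) ^ (1 / p) / ENNReal.ofReal (ν p) := by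
  classical
  haveI : Nonempty T := ⟨t₀⟩
  choose π hπmem hπd using hnet
  set M : ℕ → X → ℝ≥0∞ := fun k x =>
    (F (k+1)).sup fun u => ENNReal.ofReal |Y u x - Y (π k u) x| with hM
  have hMmeas : ∀ k, Measurable (M k) := by
    intro k
    have heq : M k = fun x => ⨆ u ∈ F (k+1), ENNReal.ofReal |Y u x - Y (π k u) x| := by
      funext x; rw [hM]; exact Finset.sup_eq_iSup _ _
    rw [heq]
    exact Measurable.iSup fun u => Measurable.iSup fun _ =>
      ((hYmeas u).sub (hYmeas _)).abs.ennreal_ofReal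
  have hf₀meas : Measurable fun x => ENNReal.ofReal |Y t₀ x| :=
    (hYmeas t₀).abs.ennreal_ofReal
  set S : X → ℝ≥0∞ := fun x => ∑' k, M k x with hSdef
  have hSmeas : Measurable S := Measurable.ennreal_tsum hMmeas
  set A : X → ℝ≥0∞ := fun x => ENNReal.ofReal |Y t₀ x| + S x with hA
  have key : ∀ (x : X) (K : ℕ), ∀ t ∈ F K,
      ENNReal.ofReal |Y t x| ≤ ENNReal.ofReal |Y t₀ x| + ∑ k ∈ Finset.range K, M k x := by
    intro x K
    induction K with
    | zero =>
        intro t ht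
        rw [hF0, Finset.mem_singleton] at ht
        subst ht; simp
    | succ K ih =>
        intro t ht
        have h1 : ENNReal.ofReal |Y t x - Y (π K t) x| ≤ M K x := by
          rw [hM]
          exact Finset.le_sup (f := fun u => ENNReal.ofReal |Y u x - Y (π K u) x|) ht
        have h2 : |Y t x| ≤ |Y (π K t) x| + |Y t x - Y (π K t) x| := by
          have := abs_add_le (Y (π K t) x) (Y t x - Y (π K t) x)
          simpa using this
        calc ENNReal.ofReal |Y t x|
            ≤ ENNReal.ofReal (|Y (π K t) x| + |Y t x - Y (π K t) x|) :=
              ENNReal.ofReal_le_ofReal h2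
          _ ≤ ENNReal.ofReal |Y (π K t) x| + ENNReal.ofReal |Y t x - Y (π K t) x| :=
              ENNReal.ofReal_add_le
          _ ≤ (ENNReal.ofReal |Y t₀ x| + ∑ k ∈ Finset.range K, M k x) + M K x :=
              add_le_add (ih _ (hπmem K t)) h1
          _ = ENNReal.ofReal |Y t₀ x| + ∑ k ∈ Finset.range (K+1), M k x := by
              rw [Finset.sum_range_succ, add_assoc]
  have hpt : ∀ x, (⨆ t, ((Y t x : ℝ) : EReal)).abs ≤ A x := by
    intro x
    refine le_trans (abs_iSup_le fun t => Y t x) (iSup_le fun t => ?_)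
    obtain ⟨K, hK⟩ := hcover t
    refine le_trans (key x K t hK) (add_le_add_right ?_ _)
    exact ENNReal.sum_le_tsum _
  rw [glNormE]
  apply iSup₂_le
  intro p hp
  obtain ⟨hap, hpb⟩ := hp
  have hp1 : (1:ℝ) ≤ p := le_trans ha hap.le
  have hp0 : (0:ℝ) < p := lt_of_lt_of_le one_pos hp1
  have hψ1 := hψ.one_le p ⟨hap, hpb⟩
  have hν1 := hν.one_le p ⟨hap, hpb⟩
  have hψpos : (0:ℝ≥0∞) < ENNReal.ofReal (ψ p) :=
    ENNReal.ofReal_pos.2 (lt_of_lt_of_le one_pos hψ1)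
  have hMk : ∀ k, (∫⁻ x, M k x ^ p ∂μ) ^ (1/p) ≤
      ((F (k+1)).card : ℝ≥0∞) ^ (1/p) * (ENNReal.ofReal (θ^k) * ENNReal.ofReal (ψ p)) := by
    intro k
    have hlink : ∀ u : T, lpNorm μ (fun x => Y u x - Y (π k u) x) p ≤
        ENNReal.ofReal (θ^k) * ENNReal.ofReal (ψ p) := by
      intro u
      have h1 : lpNorm μ (fun x => Y u x - Y (π k u) x) p / ENNReal.ofReal (ψ p)
          ≤ glNorm μ a b ψ (fun x => Y u x - Y (π k u) x) :=
        le_iSup₂ (f := fun q (_ : q ∈ expSet a b) =>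
          lpNorm μ (fun x => Y u x - Y (π k u) x) q / ENNReal.ofReal (ψ q)) p ⟨hap, hpb⟩
      exact (ENNReal.div_le_iff hψpos.ne' ENNReal.ofReal_ne_top).1 (le_trans h1 (hπd k u))
    have hint : ∀ u : T, ∫⁻ x, (ENNReal.ofReal |Y u x - Y (π k u) x|) ^ p ∂μ
        ≤ (ENNReal.ofReal (θ^k) * ENNReal.ofReal (ψ p)) ^ p := by
      intro u
      have e1 : ∫⁻ x, (ENNReal.ofReal |Y u x - Y (π k u) x|) ^ p ∂μ
          = (lpNorm μ (fun x => Y u x - Y (π k u) x) p) ^ p := by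
        rw [_root_.lpNorm, ← ENNReal.rpow_mul, one_div_mul_cancel hp0.ne', ENNReal.rpow_one]
        congr 1; funext x
        rw [ENNReal.ofReal_rpow_of_nonneg (abs_nonneg _) hp0.le]
      rw [e1]
      exact ENNReal.rpow_le_rpow (hlink u) hp0.le
    have hsup : ∀ x, M k x ^ p ≤
        ∑ u ∈ F (k+1), (ENNReal.ofReal |Y u x - Y (π k u) x|) ^ p := by
      intro x
      rcases Finset.eq_empty_or_nonempty (F (k+1)) with he | hne
      · simp [hM, he, ENNReal.zero_rpow_of_pos hp0]
      · obtain ⟨u, hu, hequ⟩ := Finset.exists_mem_eq_sup (F (k+1)) hne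
          (fun u => ENNReal.ofReal |Y u x - Y (π k u) x|)
        have hMx : M k x = ENNReal.ofReal |Y u x - Y (π k u) x| := hequ
        calc M k x ^ p = (ENNReal.ofReal |Y u x - Y (π k u) x|) ^ p := by rw [hMx]
          _ ≤ ∑ u ∈ F (k+1), (ENNReal.ofReal |Y u x - Y (π k u) x|) ^ p :=
              Finset.single_le_sum
                (f := fun u => ENNReal.ofReal |Y u x - Y (π k u) x| ^ p)
                (fun _ _ => zero_le) hu
    calc (∫⁻ x, M k x ^ p ∂μ) ^ (1/p)
        ≤ (∑ u ∈ F (k+1), (ENNReal.ofReal (θ^k) * ENNReal.ofReal (ψ p)) ^ p) ^ (1/p) := by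
          apply ENNReal.rpow_le_rpow _ (by positivity)
          refine le_trans (lintegral_mono fun x => hsup x) ?_
          rw [lintegral_finset_sum _
            (fun u _ => (show Measurable (fun x => ENNReal.ofReal |Y u x - Y (π k u) x| ^ p) from
              (((hYmeas u).sub (hYmeas _)).abs.ennreal_ofReal).pow_const p))]
          exact Finset.sum_le_sum fun u _ => hint u
      _ = (((F (k+1)).card : ℝ≥0∞) * (ENNReal.ofReal (θ^k) * ENNReal.ofReal (ψ p)) ^ p) ^ (1/p) := by
          rw [Finset.sum_const, nsmul_eq_mul]
      _ = ((F (k+1)).card : ℝ≥0∞) ^ (1/p) * (ENNReal.ofReal (θ^k) * ENNReal.ofReal (ψ p)) := by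
          rw [ENNReal.mul_rpow_of_nonneg _ _ (by positivity), ← ENNReal.rpow_mul,
            mul_one_div_cancel hp0.ne', ENNReal.rpow_one]
  have hL : lpNormE μ (fun x => ⨆ t, ((Y t x : ℝ) : EReal)) p ≤
      lpNorm μ (Y t₀) p + ∑' k, ((F (k+1)).card : ℝ≥0∞) ^ (1/p) *
        (ENNReal.ofReal (θ^k) * ENNReal.ofReal (ψ p)) := by
    calc lpNormE μ (fun x => ⨆ t, ((Y t x : ℝ) : EReal)) p
        ≤ (∫⁻ x, A x ^ p ∂μ) ^ (1/p) := by
          rw [lpNormE]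
          exact ENNReal.rpow_le_rpow
            (lintegral_mono fun x => ENNReal.rpow_le_rpow (hpt x) hp0.le) (by positivity)
      _ ≤ (∫⁻ x, (ENNReal.ofReal |Y t₀ x|) ^ p ∂μ) ^ (1/p) + (∫⁻ x, S x ^ p ∂μ) ^ (1/p) := by
          have := ENNReal.lintegral_Lp_add_le (μ := μ)
            hf₀meas.aemeasurable hSmeas.aemeasurable hp1
          simpa [hA] using this
      _ ≤ lpNorm μ (Y t₀) p + ∑' k, ((F (k+1)).card : ℝ≥0∞) ^ (1/p) *
            (ENNReal.ofReal (θ^k) * ENNReal.ofReal (ψ p)) := by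
          refine add_le_add (le_of_eq ?_) ?_
          · rw [_root_.lpNorm]
            congr 1
            exact lintegral_congr fun x =>
              ENNReal.ofReal_rpow_of_nonneg (abs_nonneg _) hp0.le
          · exact le_trans (lp_tsum_le μ M hMmeas hp1) (ENNReal.tsum_le_tsum hMk)
  have hζeq : ENNReal.ofReal (ζ p) = ENNReal.ofReal (ψ p) * ENNReal.ofReal (ν p) := by
    rw [hmul p ⟨hap, hpb⟩, ENNReal.ofReal_mul (le_trans zero_le_one hψ1)]
  have hψle : ENNReal.ofReal (ψ p) ≤ ENNReal.ofReal (ψ p) * ENNReal.ofReal (ν p) :=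
    le_mul_of_one_le_right zero_le (by
      rw [← ENNReal.ofReal_one]; exact ENNReal.ofReal_le_ofReal hν1)
  calc lpNormE μ (fun x => ⨆ t, ((Y t x : ℝ) : EReal)) p / ENNReal.ofReal (ζ p)
      ≤ (lpNorm μ (Y t₀) p + ∑' k, ((F (k+1)).card : ℝ≥0∞) ^ (1/p) *
          (ENNReal.ofReal (θ^k) * ENNReal.ofReal (ψ p))) /
          (ENNReal.ofReal (ψ p) * ENNReal.ofReal (ν p)) := by
        rw [hζeq]; exact ENNReal.div_le_div_right hL _
    _ = lpNorm μ (Y t₀) p / (ENNReal.ofReal (ψ p) * ENNReal.ofReal (ν p)) +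
        ∑' k, (((F (k+1)).card : ℝ≥0∞) ^ (1/p) *
          (ENNReal.ofReal (θ^k) * ENNReal.ofReal (ψ p)) /
          (ENNReal.ofReal (ψ p) * ENNReal.ofReal (ν p))) := by
        rw [ENNReal.add_div]
        congr 1
        simp only [div_eq_mul_inv, ENNReal.tsum_mul_right]
    _ ≤ glNorm μ a b ψ (Y t₀) +
        ∑' k : ℕ, ENNReal.ofReal (θ ^ k) *
          ⨆ q ∈ expSet a b, ((F (k + 1)).card : ℝ≥0∞) ^ (1 / q) / ENNReal.ofReal (ν q) := by
        refine add_le_add ?_ (ENNReal.tsum_le_tsum fun k => ?_)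
        · refine le_trans (ENNReal.div_le_div_left hψle _) ?_
          exact le_iSup₂ (f := fun q (_ : q ∈ expSet a b) =>
            lpNorm μ (Y t₀) q / ENNReal.ofReal (ψ q)) p ⟨hap, hpb⟩
        · have e2 : ((F (k+1)).card : ℝ≥0∞) ^ (1/p) *
              (ENNReal.ofReal (θ^k) * ENNReal.ofReal (ψ p)) =
              ENNReal.ofReal (ψ p) * (ENNReal.ofReal (θ^k) * ((F (k+1)).card : ℝ≥0∞) ^ (1/p)) := by
            ring
          rw [e2, ENNReal.mul_div_mul_left _ _ hψpos.ne' ENNReal.ofReal_ne_top,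
            mul_div_assoc]
          refine mul_le_mul_right ?_ _
          exact le_iSup₂ (f := fun q (_ : q ∈ expSet a b) =>
            ((F (k+1)).card : ℝ≥0∞) ^ (1/q) / ENNReal.ofReal (ν q)) p ⟨hap, hpb⟩
end

section
/- Entropy with logarithmic correction, case κ₂ < κ₁ (inequality (3.14)). Let ψ ∈ Ψ(a,b), let 0 < κ₂ < κ₁ < a and C₀ ≥ 1, let T be a finite nonempty set and Y(t) : X → ℝ measurable for each t ∈ T with sup_{t∈T} ‖Y(t)‖_{G(ψ)} ≤ 1. Write d_ψ(t,s) = ‖Y(t) − Y(s)‖_{G(ψ)} and assume that for every ε ∈ (0,1] there exists an ε-net of (T, d_ψ) of cardinality at most C₀ ε^{−κ₁} (1 + |log ε|)^{−κ₂}. Then, setting ψ_{κ₁,κ₂}(p) = (p/(p − κ₁))^{1 − κ₂/κ₁} · ψ(p) for p ∈ (a,b), there is a constant C depending only on C₀, κ₁ and κ₂ such that sup_{p∈(a,b)} ‖max_{t∈T} Y(t)‖_{L^p(μ)}/ψ_{κ₁,κ₂}(p) ≤ C. -/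
open MeasureTheory ENNReal Set

lemma telesc {β : ℝ} (hβ1 : β < 1) : ∀ M : ℕ,
    ∑ k ∈ Finset.Icc 1 M, ((k : ℝ) ^ (1-β) - ((k:ℝ) - 1) ^ (1-β)) = (M : ℝ) ^ (1-β) := by
  intro M
  induction M with
  | zero => simp [Real.zero_rpow (by linarith : 1 - β ≠ 0)]
  | succ M ih =>
    rw [Finset.sum_Icc_succ_top (by omega : 1 ≤ M + 1), ih]
    push_cast
    ring

lemma pow_sum_le {β : ℝ} (hβ0 : 0 < β) (hβ1 : β < 1) (M : ℕ) :
    ∑ k ∈ Finset.Icc 1 M, (k : ℝ) ^ (-β) ≤ (M : ℝ) ^ (1 - β) / (1 - β) := by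
  have h1β : 0 < 1 - β := by linarith
  have key : ∀ k : ℕ, 1 ≤ k → (1 - β) * (k : ℝ) ^ (-β) ≤
      (k : ℝ) ^ (1 - β) - ((k : ℝ) - 1) ^ (1 - β) := by
    intro k hk
    have hk0 : (0 : ℝ) < k := by exact_mod_cast hk
    have hx : (-1 : ℝ) ≤ -(1 / k) := by
      rw [neg_le_neg_iff]
      exact div_le_one_of_le₀ (by exact_mod_cast hk) hk0.le
    have hb := rpow_one_add_le_one_add_mul_self hx (by linarith : (0:ℝ) ≤ 1 - β) (by linarith)
    have e4 : (k:ℝ)^(-β) = (k:ℝ)^(1-β) * (1/k) := by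
      rw [one_div, ← Real.rpow_neg_one (k:ℝ), ← Real.rpow_add hk0]
      congr 1; ring
    have h1 : ((k : ℝ) - 1) ^ (1 - β) ≤ (k:ℝ)^(1-β) - (1-β) * (k:ℝ)^(-β) := by
      have e1 : ((k:ℝ) - 1) = k * (1 + -(1/k)) := by field_simp; ring
      have e2 : ((k:ℝ) - 1) ^ (1 - β) = (k:ℝ)^(1-β) * (1 + -(1/k)) ^ (1-β) := by
        rw [e1, Real.mul_rpow hk0.le (by linarith : (0:ℝ) ≤ 1 + -(1/k))]
      rw [e2, e4]
      have h3 : (k:ℝ)^(1-β) * (1 + -(1/k)) ^ (1-β) ≤ (k:ℝ)^(1-β) * (1 + (1-β) * -(1/k)) :=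
        mul_le_mul_of_nonneg_left hb (Real.rpow_nonneg hk0.le _)
      refine h3.trans (le_of_eq ?_)
      ring
    linarith
  calc ∑ k ∈ Finset.Icc 1 M, (k : ℝ) ^ (-β)
      ≤ ∑ k ∈ Finset.Icc 1 M, ((k : ℝ) ^ (1-β) - ((k:ℝ) - 1) ^ (1-β)) / (1 - β) := by
        refine Finset.sum_le_sum fun k hk => ?_
        have hk1 : 1 ≤ k := (Finset.mem_Icc.mp hk).1
        rw [le_div_iff₀ h1β]
        have := key k hk1
        nlinarith [key k hk1]
    _ = (∑ k ∈ Finset.Icc 1 M, ((k : ℝ) ^ (1-β) - ((k:ℝ) - 1) ^ (1-β))) / (1 - β) := by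
        rw [Finset.sum_div]
    _ ≤ (M : ℝ) ^ (1 - β) / (1 - β) := by
        rw [telesc hβ1 M]


lemma one_sub_two_rpow_ge {θ : ℝ} (hθ0 : 0 < θ) (hθ1 : θ ≤ 1) :
    θ / 3 ≤ 1 - (2:ℝ) ^ (-θ) := by
  have hl2 : 0.6931471803 < Real.log 2 := Real.log_two_gt_d9
  have hl2' : Real.log 2 < 0.6931471808 := Real.log_two_lt_d9
  have he : (2:ℝ) ^ (-θ) = Real.exp (-(θ * Real.log 2)) := by
    rw [Real.rpow_def_of_pos (by norm_num : (0:ℝ) < 2)]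
    congr 1; ring
  rw [he]
  have hexp : 1 + θ * Real.log 2 ≤ Real.exp (θ * Real.log 2) :=
    Real.add_one_le_exp _ |>.trans_eq' (by ring_nf)
  have hpos : (0:ℝ) < 1 + θ * Real.log 2 := by nlinarith
  have h1 : Real.exp (-(θ * Real.log 2)) ≤ 1 / (1 + θ * Real.log 2) := by
    rw [Real.exp_neg, inv_le_comm₀ (Real.exp_pos _) (by positivity), one_div, inv_inv]
    exact hexp
  have h2 : 1 / (1 + θ * Real.log 2) ≤ 1 - θ/3 := by
    rw [div_le_iff₀ hpos]
    have h3 : θ * (θ * Real.log 2) ≤ 1 * (θ * Real.log 2) :=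
      mul_le_mul_of_nonneg_right hθ1 (by positivity)
    nlinarith
  linarith

lemma geom_tail_le {θ : ℝ} (hθ0 : 0 < θ) (hθ1 : θ ≤ 1) (K : ℕ) :
    ∑ k ∈ Finset.Icc 1 K, (2:ℝ) ^ (-(k:ℝ)*θ) ≤ 3 / θ := by
  have hr0 : (0:ℝ) < (2:ℝ)^(-θ) := Real.rpow_pos_of_pos (by norm_num) _
  have hr1 : (2:ℝ)^(-θ) < 1 := by
    apply Real.rpow_lt_one_of_one_lt_of_neg (by norm_num) (by linarith)
  have hterm : ∀ k : ℕ, (2:ℝ) ^ (-(k:ℝ)*θ) = ((2:ℝ)^(-θ))^k := by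
    intro k
    rw [← Real.rpow_natCast ((2:ℝ)^(-θ)) k, ← Real.rpow_mul (by norm_num : (0:ℝ) ≤ 2)]
    congr 1; ring
  calc ∑ k ∈ Finset.Icc 1 K, (2:ℝ) ^ (-(k:ℝ)*θ)
      ≤ ∑ k ∈ Finset.range (K+1), ((2:ℝ)^(-θ))^k := by
        rw [Finset.sum_congr rfl (fun k _ => hterm k)]
        exact Finset.sum_le_sum_of_subset_of_nonneg
          (fun k hk => Finset.mem_range.mpr (by exact Nat.lt_succ_of_le (Finset.mem_Icc.mp hk).2))
          (fun k _ _ => by positivity)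
    _ ≤ 1 / (1 - (2:ℝ)^(-θ)) := by
        rw [geom_sum_eq hr1.ne]
        have e : (((2:ℝ)^(-θ)) ^ (K+1) - 1) / ((2:ℝ)^(-θ) - 1)
            = (1 - ((2:ℝ)^(-θ)) ^ (K+1)) / (1 - (2:ℝ)^(-θ)) := by
          rw [← neg_div_neg_eq]; ring_nf
        have hp : (0:ℝ) ≤ ((2:ℝ)^(-θ))^(K+1) := by positivity
        rw [e, div_le_div_iff₀ (by linarith) (by linarith)]
        nlinarith
    _ ≤ 3 / θ := by
        have h := one_sub_two_rpow_ge hθ0 hθ1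
        rw [div_le_div_iff₀ (by linarith) hθ0]
        linarith



lemma series_bound {θ β γ : ℝ} (hθ0 : 0 < θ) (hθ1 : θ < 1) (hβ0 : 0 < β) (hβγ : β ≤ γ)
    (hγ : γ < 1) (K : ℕ) :
    ∑ k ∈ Finset.Icc 1 K, (2:ℝ)^(-(k:ℝ)*θ) * (1 + (k:ℝ) * Real.log 2)^(-β)
      ≤ (2/(1-γ) + 6) * θ^(β-1) := by
  have hβ1 : β < 1 := lt_of_le_of_lt hβγ hγ
  have hc1 : (1:ℝ)/2 ≤ Real.log 2 := by
    have := Real.log_two_gt_d9; linarith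
  have hc2 : Real.log 2 < 1 := by
    have := Real.log_two_lt_d9; linarith
  have hc0 : (0:ℝ) < Real.log 2 := by linarith
  have hcb : Real.log 2 ^ (-β) ≤ 2 := by
    calc Real.log 2 ^ (-β) ≤ Real.log 2 ^ (-1:ℝ) :=
          Real.rpow_le_rpow_of_exponent_ge hc0 hc2.le (by linarith)
      _ ≤ 2 := by
          rw [Real.rpow_neg_one]
          rw [inv_le_comm₀ hc0 (by norm_num)]
          linarith
  have hθβ : (0:ℝ) < θ ^ (β-1) := Real.rpow_pos_of_pos hθ0 _
  rw [← Finset.sum_filter_add_sum_filter_not (Finset.Icc 1 K) (fun k : ℕ => ((k:ℝ))*θ ≤ 1)]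
  have M := Nat.floor (1/θ)
  have part1 : ∑ k ∈ (Finset.Icc 1 K).filter (fun k : ℕ => ((k:ℝ))*θ ≤ 1),
      (2:ℝ)^(-(k:ℝ)*θ) * (1 + (k:ℝ) * Real.log 2)^(-β) ≤ 2/(1-γ) * θ^(β-1) := by
    set M := Nat.floor (1/θ) with hM
    calc ∑ k ∈ (Finset.Icc 1 K).filter (fun k : ℕ => ((k:ℝ))*θ ≤ 1),
        (2:ℝ)^(-(k:ℝ)*θ) * (1 + (k:ℝ) * Real.log 2)^(-β)
        ≤ ∑ k ∈ (Finset.Icc 1 K).filter (fun k : ℕ => ((k:ℝ))*θ ≤ 1), 2 * (k:ℝ)^(-β) := by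
          refine Finset.sum_le_sum fun k hk => ?_
          have hk1 : 1 ≤ k := (Finset.mem_Icc.mp (Finset.mem_filter.mp hk).1).1
          have hk0 : (0:ℝ) < k := by exact_mod_cast hk1
          have h1 : (2:ℝ)^(-(k:ℝ)*θ) ≤ 1 :=
            Real.rpow_le_one_of_one_le_of_nonpos (by norm_num) (by nlinarith)
          have h2 : (1 + (k:ℝ) * Real.log 2)^(-β) ≤ ((k:ℝ) * Real.log 2)^(-β) :=
            Real.rpow_le_rpow_of_nonpos (by positivity) (by linarith) (by linarith)
          have h3 : ((k:ℝ) * Real.log 2)^(-β) = (k:ℝ)^(-β) * Real.log 2 ^(-β) :=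
            Real.mul_rpow hk0.le hc0.le
          have h4 : (0:ℝ) ≤ (k:ℝ)^(-β) := Real.rpow_nonneg hk0.le _
          calc (2:ℝ)^(-(k:ℝ)*θ) * (1 + (k:ℝ) * Real.log 2)^(-β)
              ≤ 1 * ((k:ℝ) * Real.log 2)^(-β) := by
                apply mul_le_mul h1 h2 (by positivity) (by norm_num)
            _ = (k:ℝ)^(-β) * Real.log 2 ^(-β) := by rw [one_mul, h3]
            _ ≤ (k:ℝ)^(-β) * 2 := by exact mul_le_mul_of_nonneg_left hcb h4
            _ = 2 * (k:ℝ)^(-β) := by ring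
      _ ≤ ∑ k ∈ Finset.Icc 1 M, 2 * (k:ℝ)^(-β) := by
          refine Finset.sum_le_sum_of_subset_of_nonneg ?_ (fun k _ _ => by positivity)
          intro k hk
          obtain ⟨hk1, hk2⟩ := Finset.mem_filter.mp hk
          refine Finset.mem_Icc.mpr ⟨(Finset.mem_Icc.mp hk1).1, Nat.le_floor ?_⟩
          rw [le_div_iff₀ hθ0]
          exact hk2
      _ = 2 * ∑ k ∈ Finset.Icc 1 M, (k:ℝ)^(-β) := by rw [Finset.mul_sum]
      _ ≤ 2 * ((M : ℝ) ^ (1 - β) / (1 - β)) := by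
          have := pow_sum_le hβ0 hβ1 M
          linarith
      _ ≤ 2/(1-γ) * θ^(β-1) := by
          have hM1 : (M:ℝ) ≤ 1/θ := Nat.floor_le (by positivity)
          have h5 : (M:ℝ)^(1-β) ≤ (1/θ)^(1-β) :=
            Real.rpow_le_rpow (by positivity) hM1 (by linarith)
          have h6 : ((1:ℝ)/θ)^(1-β) = θ^(β-1) := by
            rw [one_div, Real.inv_rpow hθ0.le, ← Real.rpow_neg hθ0.le]
            congr 1; ring
          rw [h6] at h5
          rw [div_mul_eq_mul_div, mul_div_assoc]
          have h7 : (M:ℝ)^(1-β)/(1-β) ≤ θ^(β-1)/(1-γ) := by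
            apply div_le_div₀ (by positivity) h5 (by linarith) (by linarith)
          linarith
  have part2 : ∑ k ∈ (Finset.Icc 1 K).filter (fun k : ℕ => ¬((k:ℝ))*θ ≤ 1),
      (2:ℝ)^(-(k:ℝ)*θ) * (1 + (k:ℝ) * Real.log 2)^(-β) ≤ 6 * θ^(β-1) := by
    have hcθ : (0:ℝ) < Real.log 2 / θ := by positivity
    have hstep : ∀ k ∈ (Finset.Icc 1 K).filter (fun k : ℕ => ¬((k:ℝ))*θ ≤ 1),
        (2:ℝ)^(-(k:ℝ)*θ) * (1 + (k:ℝ) * Real.log 2)^(-β)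
          ≤ (2 * θ^β) * (2:ℝ)^(-(k:ℝ)*θ) := by
      intro k hk
      obtain ⟨hk1, hk2⟩ := Finset.mem_filter.mp hk
      push_neg at hk2
      have hk1' : 1 ≤ k := (Finset.mem_Icc.mp hk1).1
      have hk0 : (0:ℝ) < k := by exact_mod_cast hk1'
      have hkc : Real.log 2 / θ ≤ (k:ℝ) * Real.log 2 := by
        rw [div_le_iff₀ hθ0]
        nlinarith
      have h2 : (1 + (k:ℝ) * Real.log 2)^(-β) ≤ (Real.log 2 / θ)^(-β) := by
        apply Real.rpow_le_rpow_of_nonpos hcθ (by linarith) (by linarith)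
      have h3 : (Real.log 2 / θ)^(-β) ≤ 2 * θ^β := by
        rw [Real.div_rpow hc0.le hθ0.le]
        have h4 : θ^(-β) = (θ^β)⁻¹ := Real.rpow_neg hθ0.le β
        have h5 : (θ:ℝ)^(-β) * (θ:ℝ)^β = 1 := by
          rw [← Real.rpow_add hθ0]; norm_num
        calc Real.log 2 ^ (-β) / θ ^ (-β) ≤ 2 / θ^(-β) := by
              gcongr
          _ = 2 * θ^β := by
              rw [div_eq_mul_inv, Real.rpow_neg hθ0.le, inv_inv]
      calc (2:ℝ)^(-(k:ℝ)*θ) * (1 + (k:ℝ) * Real.log 2)^(-β)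
          ≤ (2:ℝ)^(-(k:ℝ)*θ) * (2 * θ^β) := by
            apply mul_le_mul_of_nonneg_left (h2.trans h3) (by positivity)
        _ = (2 * θ^β) * (2:ℝ)^(-(k:ℝ)*θ) := by ring
    calc ∑ k ∈ (Finset.Icc 1 K).filter (fun k : ℕ => ¬((k:ℝ))*θ ≤ 1),
        (2:ℝ)^(-(k:ℝ)*θ) * (1 + (k:ℝ) * Real.log 2)^(-β)
        ≤ ∑ k ∈ (Finset.Icc 1 K).filter (fun k : ℕ => ¬((k:ℝ))*θ ≤ 1),
            (2 * θ^β) * (2:ℝ)^(-(k:ℝ)*θ) := Finset.sum_le_sum hstep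
      _ ≤ ∑ k ∈ Finset.Icc 1 K, (2 * θ^β) * (2:ℝ)^(-(k:ℝ)*θ) :=
          Finset.sum_le_sum_of_subset_of_nonneg (Finset.filter_subset _ _)
            (fun k _ _ => by positivity)
      _ = (2 * θ^β) * ∑ k ∈ Finset.Icc 1 K, (2:ℝ)^(-(k:ℝ)*θ) := by rw [Finset.mul_sum]
      _ ≤ (2 * θ^β) * (3/θ) := by
          apply mul_le_mul_of_nonneg_left (geom_tail_le hθ0 hθ1.le K) (by positivity)
      _ = 6 * θ^(β-1) := by
          rw [Real.rpow_sub hθ0, Real.rpow_one]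
          field_simp
          ring
  linarith


lemma theta_pow_bound {κ₁ κ₂ p : ℝ} (hκ₂ : 0 < κ₂) (hκ₁₂ : κ₂ < κ₁) (hp : κ₁ < p) :
    (1 - κ₁/p) ^ (κ₂/p - 1) ≤ 3 * (p/(p-κ₁)) ^ (1 - κ₂/κ₁) := by
  have hκ₁ : 0 < κ₁ := hκ₂.trans hκ₁₂
  have hp0 : 0 < p := hκ₁.trans hp
  have hpκ : 0 < p - κ₁ := by linarith
  set θ : ℝ := 1 - κ₁/p with hθdef
  set u : ℝ := p/(p-κ₁) with hudef
  have hθ0 : 0 < θ := by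
    rw [hθdef, sub_pos, div_lt_one hp0]; exact hp
  have hθ1 : θ < 1 := by
    rw [hθdef]; have : 0 < κ₁/p := by positivity
    linarith
  have huθ : u = θ⁻¹ := by
    rw [hudef, hθdef]; field_simp
  have hu1 : 1 ≤ u := by
    rw [huθ, le_inv_comm₀ one_pos hθ0]; simpa using hθ1.le
  have hu0 : 0 < u := lt_of_lt_of_le one_pos hu1
  set β : ℝ := κ₂/p with hβdef
  set γ : ℝ := κ₂/κ₁ with hγdef
  have hγ0 : 0 < γ := by positivity
  have hγ1 : γ < 1 := by rw [hγdef, div_lt_one hκ₁]; exact hκ₁₂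
  have hgb : γ - β = γ * θ := by
    rw [hγdef, hβdef, hθdef]; field_simp
  clear_value θ u β γ
  -- θ ^ (β - 1) = u ^ (1 - β)
  have e1 : θ ^ (β-1) = u ^ (1-β) := by
    rw [huθ, Real.inv_rpow hθ0.le, ← Real.rpow_neg hθ0.le]
    congr 1; ring
  -- u ^ (1-β) = u ^ (1-γ) * u ^ (γ*θ)
  have e2 : u ^ (1-β) = u ^ (1-γ) * u ^ (γ*θ) := by
    rw [← Real.rpow_add hu0, ← hgb]; congr 1; ring
  -- log u ≤ u / e
  have hlog : Real.log u ≤ u / Real.exp 1 := by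
    have h := Real.log_le_sub_one_of_pos (show 0 < u / Real.exp 1 by positivity)
    rw [Real.log_div (by positivity) (Real.exp_ne_zero 1), Real.log_exp] at h
    linarith
  have hθlog : θ * Real.log u ≤ (Real.exp 1)⁻¹ := by
    have : θ * (u / Real.exp 1) = (Real.exp 1)⁻¹ := by
      rw [huθ]; field_simp
    calc θ * Real.log u ≤ θ * (u / Real.exp 1) :=
          mul_le_mul_of_nonneg_left hlog hθ0.le
      _ = (Real.exp 1)⁻¹ := this
  have hlogu0 : 0 ≤ Real.log u := Real.log_nonneg hu1
  have h3 : u ^ (γ*θ) ≤ 3 := by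
    rw [Real.rpow_def_of_pos hu0]
    have hE : 1 ≤ Real.exp 1 := by
      have := Real.add_one_le_exp (1:ℝ); linarith
    have h4 : Real.log u * (γ*θ) ≤ 1 := by
      have h5 : γ * (θ * Real.log u) ≤ 1 * (Real.exp 1)⁻¹ := by
        apply mul_le_mul hγ1.le hθlog (mul_nonneg hθ0.le hlogu0) (by norm_num)
      have h6 : (Real.exp 1)⁻¹ ≤ 1 := by
        rw [inv_le_one_iff₀]; right; exact hE
      have h7 : Real.log u * (γ*θ) = γ*(θ*Real.log u) := by ring
      rw [h7]; linarith
    calc Real.exp (Real.log u * (γ*θ)) ≤ Real.exp 1 := Real.exp_le_exp.mpr h4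
      _ ≤ 3 := by have := Real.exp_one_lt_d9; linarith
  calc θ ^ (β-1) = u ^ (1-γ) * u ^ (γ*θ) := by rw [e1, e2]
    _ ≤ u ^ (1-γ) * 3 := mul_le_mul_of_nonneg_left h3 (Real.rpow_nonneg hu0.le _)
    _ = 3 * u ^ (1-γ) := by ring



lemma numeric_bound' {κ₁ κ₂ C₀ p : ℝ} (hκ₂ : 0 < κ₂) (hκ₁₂ : κ₂ < κ₁) (hC₀ : 1 ≤ C₀)
    (hp1 : 1 ≤ p) (hpκ : κ₁ < p) (n K : ℕ) (hn : 1 ≤ n) (hnK : (n:ℝ) ≤ (2:ℝ)^(K:ℝ))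
    (N : ℕ → ℝ) (hN0 : ∀ k, 0 ≤ N k)
    (hN : ∀ k : ℕ, N k ≤ C₀ * (2:ℝ)^((k:ℝ)*κ₁) * (1+(k:ℝ)*Real.log 2)^(-κ₂)) :
    (n:ℝ)^(1/p) * (2:ℝ)^(-(K:ℝ)) + (∑ j ∈ Finset.range K, (N (j+1))^(1/p) * (2:ℝ)^(-(j:ℝ)))
        + (N 0)^(1/p)
      ≤ (1 + C₀ + 6*C₀*(2/(1-κ₂/κ₁)+6)) * (p/(p-κ₁))^(1-κ₂/κ₁) := by
  have hκ₁ : 0 < κ₂ := hκ₂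
  have hκ₁0 : 0 < κ₁ := hκ₂.trans hκ₁₂
  have hp0 : 0 < p := lt_of_lt_of_le one_pos hp1
  have hc0 : (0:ℝ) < Real.log 2 := Real.log_pos (by norm_num)
  set θ : ℝ := 1 - κ₁/p with hθdef
  set β : ℝ := κ₂/p with hβdef
  set γ : ℝ := κ₂/κ₁ with hγdef
  have hθ0 : 0 < θ := by rw [hθdef, sub_pos, div_lt_one hp0]; exact hpκ
  have hθ1 : θ < 1 := by
    rw [hθdef]; have : 0 < κ₁/p := by positivity
    linarith
  have hβ0 : 0 < β := by positivity
  have hβγ : β ≤ γ := by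
    rw [hβdef, hγdef]
    apply div_le_div_of_nonneg_left hκ₂.le hκ₁0 hpκ.le
  have hγ1 : γ < 1 := by rw [hγdef, div_lt_one hκ₁0]; exact hκ₁₂
  have hpκ0 : 0 < p - κ₁ := by linarith
  have hu1 : (1:ℝ) ≤ (p/(p-κ₁))^(1-γ) := by
    apply Real.one_le_rpow _ (by linarith)
    rw [le_div_iff₀ hpκ0]
    linarith
  -- first term ≤ 1
  have hT1 : (n:ℝ)^(1/p) * (2:ℝ)^(-(K:ℝ)) ≤ 1 := by
    have h1 : (n:ℝ)^(1/p) ≤ (n:ℝ) := by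
      calc (n:ℝ)^(1/p) ≤ (n:ℝ)^(1:ℝ) := by
            apply Real.rpow_le_rpow_of_exponent_le (by exact_mod_cast hn)
            rw [div_le_one hp0]; exact hp1
        _ = (n:ℝ) := Real.rpow_one _
    have h2 : (2:ℝ)^(-(K:ℝ)) = ((2:ℝ)^(K:ℝ))⁻¹ := by
      rw [← Real.rpow_neg (by norm_num)]
    have h3 : (0:ℝ) < (2:ℝ)^(K:ℝ) := Real.rpow_pos_of_pos (by norm_num) _
    rw [h2, ← div_eq_mul_inv, div_le_one h3]
    exact h1.trans hnK
  -- third term ≤ C₀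
  have hT3 : (N 0)^(1/p) ≤ C₀ := by
    have h0 : N 0 ≤ C₀ := by
      have := hN 0
      simpa using this
    calc (N 0)^(1/p) ≤ C₀^(1/p) := Real.rpow_le_rpow (hN0 0) h0 (by positivity)
      _ ≤ C₀^(1:ℝ) := Real.rpow_le_rpow_of_exponent_le hC₀ (by rw [div_le_one hp0]; exact hp1)
      _ = C₀ := Real.rpow_one _
  -- middle sum
  have hT2 : (∑ j ∈ Finset.range K, (N (j+1))^(1/p) * (2:ℝ)^(-(j:ℝ)))
      ≤ 6*C₀*(2/(1-γ)+6) * (p/(p-κ₁))^(1-γ) := by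
    have hterm : ∀ j : ℕ, (N (j+1))^(1/p) * (2:ℝ)^(-(j:ℝ))
        ≤ (2*C₀) * ((2:ℝ)^(-((j+1:ℕ):ℝ)*θ) * (1 + ((j+1:ℕ):ℝ) * Real.log 2)^(-β)) := by
      intro j
      set k : ℕ := j + 1 with hkdef
      have hk1 : (1:ℝ) ≤ (k:ℝ) := by exact_mod_cast Nat.one_le_iff_ne_zero.mpr (by omega)
      have hbase : (0:ℝ) ≤ 1 + (k:ℝ)*Real.log 2 := by positivity
      have h1 : (N k)^(1/p) ≤ C₀ * (2:ℝ)^((k:ℝ)*κ₁/p) * (1+(k:ℝ)*Real.log 2)^(-β) := by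
        calc (N k)^(1/p)
            ≤ (C₀ * (2:ℝ)^((k:ℝ)*κ₁) * (1+(k:ℝ)*Real.log 2)^(-κ₂))^(1/p) :=
              Real.rpow_le_rpow (hN0 k) (hN k) (by positivity)
          _ = C₀^(1/p) * ((2:ℝ)^((k:ℝ)*κ₁))^(1/p) * ((1+(k:ℝ)*Real.log 2)^(-κ₂))^(1/p) := by
              rw [Real.mul_rpow (by positivity) (by positivity),
                Real.mul_rpow (by positivity) (by positivity)]
          _ = C₀^(1/p) * (2:ℝ)^((k:ℝ)*κ₁/p) * (1+(k:ℝ)*Real.log 2)^(-β) := by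
              rw [← Real.rpow_mul (by norm_num : (0:ℝ) ≤ 2),
                ← Real.rpow_mul hbase]
              rw [hβdef]
              ring_nf
          _ ≤ C₀ * (2:ℝ)^((k:ℝ)*κ₁/p) * (1+(k:ℝ)*Real.log 2)^(-β) := by
              have : C₀^(1/p) ≤ C₀ := by
                calc C₀^(1/p) ≤ C₀^(1:ℝ) :=
                      Real.rpow_le_rpow_of_exponent_le hC₀ (by rw [div_le_one hp0]; exact hp1)
                  _ = C₀ := Real.rpow_one _
              have h2 : (0:ℝ) ≤ (2:ℝ)^((k:ℝ)*κ₁/p) := by positivity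
              have h3 : (0:ℝ) ≤ (1+(k:ℝ)*Real.log 2)^(-β) := Real.rpow_nonneg hbase _
              exact mul_le_mul_of_nonneg_right (mul_le_mul_of_nonneg_right this h2) h3
      have h4 : (2:ℝ)^(-(j:ℝ)) = 2 * (2:ℝ)^(-(k:ℝ)) := by
        rw [show -(j:ℝ) = 1 + -((k:ℝ)) by rw [hkdef]; push_cast; ring,
          Real.rpow_add (by norm_num : (0:ℝ) < 2), Real.rpow_one]
      have e5 : (2:ℝ)^((k:ℝ)*κ₁/p) * (2:ℝ)^(-(k:ℝ)) = (2:ℝ)^(-(k:ℝ)*θ) := by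
        rw [← Real.rpow_add (by norm_num : (0:ℝ) < 2)]
        congr 1
        rw [hθdef]; field_simp; ring
      calc (N k)^(1/p) * (2:ℝ)^(-(j:ℝ)) = 2 * ((N k)^(1/p) * (2:ℝ)^(-(k:ℝ))) := by
            rw [h4]; ring
        _ ≤ 2 * ((C₀ * (2:ℝ)^((k:ℝ)*κ₁/p) * (1+(k:ℝ)*Real.log 2)^(-β)) * (2:ℝ)^(-(k:ℝ))) := by
            have h6 : (0:ℝ) ≤ (2:ℝ)^(-(k:ℝ)) := by positivity
            have := mul_le_mul_of_nonneg_right h1 h6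
            linarith
        _ = (2*C₀) * (((2:ℝ)^((k:ℝ)*κ₁/p) * (2:ℝ)^(-(k:ℝ))) * (1+(k:ℝ)*Real.log 2)^(-β)) := by
            ring
        _ = (2*C₀) * ((2:ℝ)^(-(k:ℝ)*θ) * (1 + (k:ℝ) * Real.log 2)^(-β)) := by rw [e5]
    calc ∑ j ∈ Finset.range K, (N (j+1))^(1/p) * (2:ℝ)^(-(j:ℝ))
        ≤ ∑ j ∈ Finset.range K,
            (2*C₀) * ((2:ℝ)^(-((j+1:ℕ):ℝ)*θ) * (1 + ((j+1:ℕ):ℝ) * Real.log 2)^(-β)) :=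
          Finset.sum_le_sum fun j _ => hterm j
      _ = (2*C₀) * ∑ k ∈ Finset.Icc 1 K, ((2:ℝ)^(-(k:ℝ)*θ) * (1 + (k:ℝ) * Real.log 2)^(-β)) := by
          rw [Finset.mul_sum, ← Finset.Ico_add_one_right_eq_Icc, Finset.sum_Ico_eq_sum_range]
          simp only [Nat.add_sub_cancel]
          refine Finset.sum_congr rfl fun j _ => ?_
          rw [add_comm 1 j]
      _ ≤ (2*C₀) * ((2/(1-γ) + 6) * θ^(β-1)) := by
          have hs := series_bound hθ0 hθ1 hβ0 hβγ hγ1 K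
          have h2C : (0:ℝ) ≤ 2*C₀ := by linarith
          exact mul_le_mul_of_nonneg_left hs h2C
      _ ≤ (2*C₀) * ((2/(1-γ) + 6) * (3 * (p/(p-κ₁))^(1-γ))) := by
          have ht := theta_pow_bound hκ₂ hκ₁₂ hpκ
          rw [← hθdef, ← hβdef, ← hγdef] at ht
          have hpos : (0:ℝ) ≤ 2/(1-γ) + 6 := by
            have : (0:ℝ) < 1 - γ := by linarith
            positivity
          have := mul_le_mul_of_nonneg_left ht hpos
          have h2C : (0:ℝ) ≤ 2*C₀ := by linarith
          exact mul_le_mul_of_nonneg_left this h2C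
      _ = 6*C₀*(2/(1-γ)+6) * (p/(p-κ₁))^(1-γ) := by ring
  have htot := add_le_add (add_le_add hT1 hT2) hT3
  have hcoef : (0:ℝ) ≤ 1 + C₀ := by linarith
  have hgpos : (0:ℝ) < 1 - γ := by linarith
  have h6C : (0:ℝ) ≤ 6*C₀*(2/(1-γ)+6) := by positivity
  nlinarith [mul_le_mul_of_nonneg_left hu1 hcoef]

section MeasLemmas
variable {X : Type*} [MeasurableSpace X] {μ : Measure X}

lemma lpNorm_eq_eLpNorm (f : X → ℝ) {p : ℝ} (hp : 0 < p) :
    lpNorm μ f p = eLpNorm f (ENNReal.ofReal p) μ := by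
  rw [eLpNorm_eq_lintegral_rpow_enorm_toReal (by simp [hp, hp.not_ge]) ENNReal.ofReal_ne_top,
    ENNReal.toReal_ofReal hp.le]
  unfold _root_.lpNorm
  congr 1
  refine lintegral_congr fun x => ?_
  rw [Real.enorm_eq_ofReal_abs, ENNReal.ofReal_rpow_of_nonneg (abs_nonneg _) hp.le]

lemma lpNorm_mono' {f g : X → ℝ} (h : ∀ x, |f x| ≤ g x) {p : ℝ} (hp : 0 < p) :
    lpNorm μ f p ≤ lpNorm μ g p := by
  unfold _root_.lpNorm
  apply ENNReal.rpow_le_rpow _ (by positivity)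
  refine lintegral_mono fun x => ENNReal.ofReal_le_ofReal ?_
  have h0 : 0 ≤ g x := (abs_nonneg _).trans (h x)
  calc |f x| ^ p ≤ (g x) ^ p := Real.rpow_le_rpow (abs_nonneg _) (h x) hp.le
    _ ≤ |g x| ^ p := by rw [abs_of_nonneg h0]

lemma lpNorm_add_le' {f g : X → ℝ} (hf : Measurable f) (hg : Measurable g) {p : ℝ}
    (hp : 1 ≤ p) : lpNorm μ (fun x => f x + g x) p ≤ lpNorm μ f p + lpNorm μ g p := by
  have hp0 : 0 < p := lt_of_lt_of_le one_pos hp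
  rw [lpNorm_eq_eLpNorm _ hp0, lpNorm_eq_eLpNorm _ hp0, lpNorm_eq_eLpNorm _ hp0]
  exact eLpNorm_add_le hf.aestronglyMeasurable hg.aestronglyMeasurable
    ((ENNReal.one_le_ofReal).mpr hp)

lemma lpNorm_finsum_le' {ι : Type*} (s : Finset ι) (f : ι → X → ℝ)
    (hf : ∀ i, Measurable (f i)) {p : ℝ} (hp : 1 ≤ p) :
    lpNorm μ (fun x => ∑ i ∈ s, f i x) p ≤ ∑ i ∈ s, lpNorm μ (f i) p := by
  have hp0 : 0 < p := lt_of_lt_of_le one_pos hp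
  rw [lpNorm_eq_eLpNorm _ hp0]
  have he : (fun x => ∑ i ∈ s, f i x) = (∑ i ∈ s, f i) := by
    funext x; simp [Finset.sum_apply]
  rw [he]
  refine (eLpNorm_sum_le (fun i _ => (hf i).aestronglyMeasurable)
    ((ENNReal.one_le_ofReal).mpr hp)).trans ?_
  refine le_of_eq (Finset.sum_congr rfl fun i _ => ?_)
  rw [lpNorm_eq_eLpNorm _ hp0]

lemma sup'_lpNorm_le' {ι : Type*} (F : Finset ι) (hF : F.Nonempty) (g : ι → X → ℝ)
    (hg : ∀ i, Measurable (g i)) {p : ℝ} (hp : 1 ≤ p) {c : ℝ} (hc : 0 ≤ c)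
    (hb : ∀ i ∈ F, lpNorm μ (g i) p ≤ ENNReal.ofReal c) :
    lpNorm μ (fun x => F.sup' hF (fun i => |g i x|)) p
      ≤ ENNReal.ofReal ((F.card : ℝ) ^ (1/p) * c) := by
  have hp0 : 0 < p := lt_of_lt_of_le one_pos hp
  have hmeas : ∀ i : ι, Measurable fun x => ENNReal.ofReal (|g i x| ^ p) := fun i =>
    ENNReal.measurable_ofReal.comp
      ((Real.continuous_rpow_const hp0.le).measurable.comp (hg i).abs)
  have hpt : ∀ x, ENNReal.ofReal (|F.sup' hF (fun i => |g i x|)| ^ p)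
      ≤ ∑ i ∈ F, ENNReal.ofReal (|g i x| ^ p) := by
    intro x
    obtain ⟨i₀, hi₀, he⟩ := Finset.exists_mem_eq_sup' hF (fun i => |g i x|)
    rw [he, abs_abs]
    exact Finset.single_le_sum (f := fun i => ENNReal.ofReal (|g i x| ^ p))
      (fun i _ => zero_le) hi₀
  have key : ∀ i ∈ F, (∫⁻ x, ENNReal.ofReal (|g i x| ^ p) ∂μ) ≤ (ENNReal.ofReal c) ^ p := by
    intro i hi
    have h1 : (∫⁻ x, ENNReal.ofReal (|g i x| ^ p) ∂μ) = (lpNorm μ (g i) p) ^ p := by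
      unfold _root_.lpNorm
      rw [← ENNReal.rpow_mul, one_div, inv_mul_cancel₀ (ne_of_gt hp0), ENNReal.rpow_one]
    rw [h1]
    exact ENNReal.rpow_le_rpow (hb i hi) hp0.le
  unfold _root_.lpNorm
  calc (∫⁻ x, ENNReal.ofReal (|F.sup' hF (fun i => |g i x|)| ^ p) ∂μ) ^ (1/p)
      ≤ (∫⁻ x, ∑ i ∈ F, ENNReal.ofReal (|g i x| ^ p) ∂μ) ^ (1/p) :=
        ENNReal.rpow_le_rpow (lintegral_mono hpt) (by positivity)
    _ = (∑ i ∈ F, ∫⁻ x, ENNReal.ofReal (|g i x| ^ p) ∂μ) ^ (1/p) := by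
        rw [lintegral_finset_sum _ (fun i _ => hmeas i)]
    _ ≤ ((F.card : ℝ≥0∞) * (ENNReal.ofReal c) ^ p) ^ (1/p) := by
        apply ENNReal.rpow_le_rpow _ (by positivity)
        have := Finset.sum_le_card_nsmul F _ _ key
        rwa [nsmul_eq_mul] at this
    _ = ENNReal.ofReal ((F.card : ℝ) ^ (1/p) * c) := by
        rw [ENNReal.mul_rpow_of_nonneg _ _ (by positivity : (0:ℝ) ≤ 1/p),
          ← ENNReal.rpow_mul, mul_one_div_cancel (ne_of_gt hp0), ENNReal.rpow_one,
          ← ENNReal.ofReal_natCast F.card,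
          ENNReal.ofReal_rpow_of_nonneg (Nat.cast_nonneg _) (by positivity : (0:ℝ) ≤ 1/p),
          ← ENNReal.ofReal_mul (by positivity)]


lemma glNorm_le_imp {a : ℝ} {b : ℝ≥0∞} {ψ : ℝ → ℝ} {f : X → ℝ} {p : ℝ}
    (hp : p ∈ expSet a b) (hψp : 1 ≤ ψ p) {e : ℝ≥0∞} (h : glNorm μ a b ψ f ≤ e) :
    lpNorm μ f p ≤ e * ENNReal.ofReal (ψ p) := by
  have h1 : lpNorm μ f p / ENNReal.ofReal (ψ p) ≤ e :=
    le_trans (le_iSup₂ (f := fun (q : ℝ) (_ : q ∈ expSet a b) =>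
      lpNorm μ f q / ENNReal.ofReal (ψ q)) p hp) h
  rwa [ENNReal.div_le_iff (by simp [ENNReal.ofReal_eq_zero]; linarith) ENNReal.ofReal_ne_top] at h1
end MeasLemmas

/-- Entropy with logarithmic correction, case κ₂ < κ₁ (inequality (3.14)). -/
theorem log_entropy_BGL_lt (κ₁ κ₂ C₀ : ℝ) (hκ₂ : 0 < κ₂) (hκ₁₂ : κ₂ < κ₁) (hC₀ : 1 ≤ C₀) :
    ∃ C : ℝ, 0 < C ∧
      ∀ (X : Type*) [MeasurableSpace X], ∀ (μ : Measure X) [SigmaFinite μ],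
      ∀ (a : ℝ) (b : ℝ≥0∞), 1 ≤ a → ENNReal.ofReal a < b → κ₁ < a →
      ∀ (ψ : ℝ → ℝ), IsPsi a b ψ →
      ∀ (T : Type*) [Fintype T] [Nonempty T],
      ∀ (Y : T → X → ℝ), (∀ t, Measurable (Y t)) →
      (∀ t : T, glNorm μ a b ψ (Y t) ≤ 1) →
      (∀ ε : ℝ, 0 < ε → ε ≤ 1 → ∃ F : Finset T,
        ((F.card : ℝ) ≤ C₀ * ε ^ (-κ₁) * (1 + |Real.log ε|) ^ (-κ₂)) ∧
          ∀ t : T, ∃ s ∈ F, glNorm μ a b ψ (fun x => Y t x - Y s x) ≤ ENNReal.ofReal ε) →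
      (⨆ p ∈ expSet a b,
          lpNorm μ (fun x => ⨆ t, Y t x) p /
            ENNReal.ofReal ((p / (p - κ₁)) ^ (1 - κ₂ / κ₁) * ψ p)) ≤
        ENNReal.ofReal C := by
  have hκ₁0 : 0 < κ₁ := hκ₂.trans hκ₁₂
  have hγ1 : κ₂/κ₁ < 1 := by rw [div_lt_one hκ₁0]; exact hκ₁₂
  have hγpos : 0 < 1 - κ₂/κ₁ := by linarith
  refine ⟨1 + C₀ + 6*C₀*(2/(1-κ₂/κ₁)+6), by positivity, ?_⟩
  intro X _ μ _ a b ha hab haκ ψ hψ T _ _ Y hYm hY1 hnet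
  refine iSup₂_le fun p hp => ?_
  obtain ⟨hap, hpb⟩ := hp
  have hp1 : 1 ≤ p := ha.trans hap.le
  have hp0 : 0 < p := lt_of_lt_of_le one_pos hp1
  have hκp : κ₁ < p := haκ.trans hap
  have hψp : 1 ≤ ψ p := hψ.one_le p ⟨hap, hpb⟩
  have hψ0 : (0:ℝ) ≤ ψ p := by linarith
  -- extract the nets
  have hnet' : ∀ k : ℕ, ∃ F : Finset T,
      ((F.card : ℝ) ≤ C₀ * (2:ℝ)^((k:ℝ)*κ₁) * (1+(k:ℝ)*Real.log 2)^(-κ₂)) ∧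
      ∀ t : T, ∃ s ∈ F, glNorm μ a b ψ (fun x => Y t x - Y s x)
        ≤ ENNReal.ofReal ((2:ℝ)^(-(k:ℝ))) := by
    intro k
    obtain ⟨F, h1, h2⟩ := hnet ((2:ℝ)^(-(k:ℝ))) (by positivity)
      (Real.rpow_le_one_of_one_le_of_nonpos (by norm_num) (neg_nonpos.mpr (Nat.cast_nonneg k)))
    refine ⟨F, ?_, h2⟩
    have e1 : ((2:ℝ)^(-(k:ℝ)))^(-κ₁) = (2:ℝ)^((k:ℝ)*κ₁) := by
      rw [← Real.rpow_mul (by norm_num : (0:ℝ) ≤ 2)]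
      congr 1; ring
    have e2 : |Real.log ((2:ℝ)^(-(k:ℝ)))| = (k:ℝ)*Real.log 2 := by
      rw [Real.log_rpow (by norm_num : (0:ℝ) < 2), abs_mul, abs_neg, abs_of_nonneg
        (Nat.cast_nonneg k : (0:ℝ) ≤ (k:ℝ)), abs_of_nonneg (Real.log_nonneg (by norm_num))]
    rw [e1, e2] at h1
    exact h1
  choose F hFcard hFnear using hnet'
  choose π hπmem hπd using hFnear
  have hFne : ∀ k, (F k).Nonempty := fun k => ⟨π k (Classical.arbitrary T), hπmem _ _⟩
  set n : ℕ := Fintype.card T with hn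
  have hn1 : 1 ≤ n := Fintype.card_pos
  set K : ℕ := n with hK
  have hn2K : (n:ℝ) ≤ (2:ℝ)^((K:ℕ):ℝ) := by
    rw [Real.rpow_natCast]
    exact_mod_cast (Nat.lt_two_pow_self (n := K)).le
  -- the chain maps
  set ech : T → ℕ → T := fun t j => Nat.rec (π K t) (fun j' ej => π (K - j' - 1) ej) j with hech
  have hechmem : ∀ (t : T) (j : ℕ), ech t j ∈ F (K - j) := by
    intro t j
    induction j with
    | zero => exact hπmem K t
    | succ j ih =>
      have hkj : K - (j+1) = K - j - 1 := by omega
      rw [hkj]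
      exact hπmem _ _
  -- level functions
  set HH : ℕ → X → ℝ := fun k x => (F k).sup' (hFne k)
    (fun u => |Y u x - Y (π (k-1) u) x|) with hHH
  set H0 : X → ℝ := fun x => (F 0).sup' (hFne 0) (fun v => |Y v x|) with hH0
  set TL : X → ℝ := fun x => Finset.univ.sup' Finset.univ_nonempty
    (fun t : T => |Y t x - Y (π K t) x|) with hTL
  -- pointwise chain bound
  have chain : ∀ (t : T) (x : X),
      |Y t x| ≤ TL x + (∑ j ∈ Finset.range K, HH (j+1) x) + H0 x := by
    intro t x
    have htele : Y t x = (Y t x - Y (ech t 0) x)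
        + (∑ j ∈ Finset.range K, (Y (ech t j) x - Y (ech t (j+1)) x)) + Y (ech t K) x := by
      rw [Finset.sum_range_sub' (fun j => Y (ech t j) x) K]
      ring
    have habs : |Y t x| ≤ |Y t x - Y (ech t 0) x|
        + (∑ j ∈ Finset.range K, |Y (ech t j) x - Y (ech t (j+1)) x|) + |Y (ech t K) x| := by
      calc |Y t x| = |(Y t x - Y (ech t 0) x)
          + (∑ j ∈ Finset.range K, (Y (ech t j) x - Y (ech t (j+1)) x)) + Y (ech t K) x| := by
            rw [← htele]
        _ ≤ |(Y t x - Y (ech t 0) x)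
            + (∑ j ∈ Finset.range K, (Y (ech t j) x - Y (ech t (j+1)) x))| + |Y (ech t K) x| :=
          abs_add_le _ _
        _ ≤ |Y t x - Y (ech t 0) x|
            + |∑ j ∈ Finset.range K, (Y (ech t j) x - Y (ech t (j+1)) x)| + |Y (ech t K) x| := by
          have := abs_add_le (Y t x - Y (ech t 0) x)
            (∑ j ∈ Finset.range K, (Y (ech t j) x - Y (ech t (j+1)) x))
          linarith
        _ ≤ |Y t x - Y (ech t 0) x|
            + (∑ j ∈ Finset.range K, |Y (ech t j) x - Y (ech t (j+1)) x|) + |Y (ech t K) x| := by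
          have := Finset.abs_sum_le_sum_abs
            (fun j => Y (ech t j) x - Y (ech t (j+1)) x) (Finset.range K)
          linarith
    refine habs.trans (add_le_add (add_le_add ?_ ?_) ?_)
    · exact Finset.le_sup' (fun t' : T => |Y t' x - Y (π K t') x|) (Finset.mem_univ t)
    · calc ∑ j ∈ Finset.range K, |Y (ech t j) x - Y (ech t (j+1)) x|
          ≤ ∑ j ∈ Finset.range K, HH (K - j) x := by
            refine Finset.sum_le_sum fun j hj => ?_
            have hmem : ech t j ∈ F (K - j) := hechmem t j
            have hstep : ech t (j+1) = π (K - j - 1) (ech t j) := rfl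
            rw [hstep]
            exact Finset.le_sup' (fun u => |Y u x - Y (π ((K-j) - 1) u) x|) hmem
        _ = ∑ j ∈ Finset.range K, HH (j+1) x := by
            rw [← Finset.sum_range_reflect (fun j => HH (j+1) x) K]
            refine Finset.sum_congr rfl fun j hj => ?_
            have hj' : j < K := Finset.mem_range.mp hj
            have : K - 1 - j + 1 = K - j := by omega
            rw [this]
    · have hmem : ech t K ∈ F 0 := by
        have := hechmem t K
        rwa [Nat.sub_self] at this
      exact Finset.le_sup' (fun v => |Y v x|) hmem
  -- pointwise bound on the sup
  have hsup : ∀ x, |(⨆ t, Y t x)|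
      ≤ TL x + (∑ j ∈ Finset.range K, HH (j+1) x) + H0 x := by
    intro x
    have hub : (⨆ t, Y t x) ≤ TL x + (∑ j ∈ Finset.range K, HH (j+1) x) + H0 x :=
      ciSup_le fun t => (le_abs_self _).trans (chain t x)
    have t₀ : T := Classical.arbitrary T
    have hlb : -(TL x + (∑ j ∈ Finset.range K, HH (j+1) x) + H0 x) ≤ ⨆ t, Y t x := by
      refine le_trans ?_ (le_ciSup (Finite.bddAbove_range _) t₀)
      have h1 := chain t₀ x
      have h2 := neg_abs_le (Y t₀ x)
      linarith
    exact abs_le.mpr ⟨hlb, hub⟩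
  -- measurability of the level functions
  have hTLm : Measurable TL := by
    have he : TL = Finset.univ.sup' Finset.univ_nonempty
        (fun t : T => fun x => |Y t x - Y (π K t) x|) :=
      funext fun x => (Finset.sup'_apply Finset.univ_nonempty
        (fun t : T => fun x => |Y t x - Y (π K t) x|) x).symm
    rw [he]
    exact Finset.measurable_sup' _ (fun t _ => ((hYm t).sub (hYm (π K t))).abs)
  have hHHm : ∀ k, Measurable (HH k) := by
    intro k
    have he : HH k = (F k).sup' (hFne k)
        (fun u => fun x => |Y u x - Y (π (k-1) u) x|) :=
      funext fun x => (Finset.sup'_apply (hFne k)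
        (fun u => fun x => |Y u x - Y (π (k-1) u) x|) x).symm
    rw [he]
    exact Finset.measurable_sup' _ (fun u _ => ((hYm u).sub (hYm (π (k-1) u))).abs)
  have hH0m : Measurable H0 := by
    have he : H0 = (F 0).sup' (hFne 0) (fun v => fun x => |Y v x|) :=
      funext fun x => (Finset.sup'_apply (hFne 0) (fun v => fun x => |Y v x|) x).symm
    rw [he]
    exact Finset.measurable_sup' _ (fun v _ => (hYm v).abs)
  have hMsum : Measurable (fun x => ∑ j ∈ Finset.range K, HH (j+1) x) :=
    Finset.measurable_sum _ (fun j _ => hHHm (j+1))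
  -- Lp bounds for the pieces
  have hexp : p ∈ expSet a b := ⟨hap, hpb⟩
  have hTLb : lpNorm μ TL p
      ≤ ENNReal.ofReal ((n:ℝ)^(1/p) * ((2:ℝ)^(-(K:ℝ)) * ψ p)) := by
    have hb : ∀ t ∈ (Finset.univ : Finset T),
        lpNorm μ (fun x => Y t x - Y (π K t) x) p
          ≤ ENNReal.ofReal ((2:ℝ)^(-(K:ℝ)) * ψ p) := by
      intro t _
      have h := glNorm_le_imp hexp hψp (hπd K t)
      rwa [← ENNReal.ofReal_mul (by positivity)] at h
    have h := sup'_lpNorm_le' Finset.univ Finset.univ_nonempty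
      (fun t => fun x => Y t x - Y (π K t) x)
      (fun t => (hYm t).sub (hYm (π K t))) hp1 (by positivity) hb
    rw [Finset.card_univ] at h
    exact h
  have hHb : ∀ j : ℕ, lpNorm μ (HH (j+1)) p
      ≤ ENNReal.ofReal ((((F (j+1)).card:ℝ))^(1/p) * ((2:ℝ)^(-(j:ℝ)) * ψ p)) := by
    intro j
    have hb : ∀ u ∈ F (j+1), lpNorm μ (fun x => Y u x - Y (π j u) x) p
        ≤ ENNReal.ofReal ((2:ℝ)^(-(j:ℝ)) * ψ p) := by
      intro u _
      have h := glNorm_le_imp hexp hψp (hπd j u)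
      rwa [← ENNReal.ofReal_mul (by positivity)] at h
    exact sup'_lpNorm_le' (F (j+1)) (hFne (j+1)) (fun u => fun x => Y u x - Y (π j u) x)
      (fun u => (hYm u).sub (hYm (π j u))) hp1 (by positivity) hb
  have hH0b : lpNorm μ H0 p ≤ ENNReal.ofReal ((((F 0).card:ℝ))^(1/p) * ψ p) := by
    have hb : ∀ v ∈ F 0, lpNorm μ (Y v) p ≤ ENNReal.ofReal (ψ p) := by
      intro v _
      have h := glNorm_le_imp hexp hψp (hY1 v)
      rwa [one_mul] at h
    exact sup'_lpNorm_le' (F 0) (hFne 0) Y hYm hp1 hψ0 hb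
  -- triangle inequality
  have htri : lpNorm μ (fun x => ⨆ t, Y t x) p
      ≤ lpNorm μ TL p + (∑ j ∈ Finset.range K, lpNorm μ (HH (j+1)) p) + lpNorm μ H0 p := by
    refine le_trans (lpNorm_mono' hsup hp0) ?_
    calc lpNorm μ (fun x => TL x + (∑ j ∈ Finset.range K, HH (j+1) x) + H0 x) p
        ≤ lpNorm μ (fun x => TL x + (∑ j ∈ Finset.range K, HH (j+1) x)) p
            + lpNorm μ H0 p :=
          lpNorm_add_le' (hTLm.add hMsum) hH0m hp1
      _ ≤ (lpNorm μ TL p + lpNorm μ (fun x => ∑ j ∈ Finset.range K, HH (j+1) x) p)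
            + lpNorm μ H0 p := by
          exact add_le_add_left (lpNorm_add_le' hTLm hMsum hp1) _
      _ ≤ lpNorm μ TL p + (∑ j ∈ Finset.range K, lpNorm μ (HH (j+1)) p)
            + lpNorm μ H0 p := by
          refine add_le_add_left (add_le_add_right ?_ _) _
          exact lpNorm_finsum_le' (Finset.range K) (fun j => HH (j+1)) (fun j => hHHm (j+1)) hp1
  -- numeric bound
  have NB := numeric_bound' hκ₂ hκ₁₂ hC₀ hp1 hκp n K hn1 hn2K
    (fun k => ((F k).card : ℝ)) (fun k => Nat.cast_nonneg _) hFcard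
  have hreal : (n:ℝ)^(1/p) * ((2:ℝ)^(-(K:ℝ)) * ψ p)
      + (∑ j ∈ Finset.range K, (((F (j+1)).card:ℝ))^(1/p) * ((2:ℝ)^(-(j:ℝ)) * ψ p))
      + (((F 0).card:ℝ))^(1/p) * ψ p
      ≤ (1 + C₀ + 6*C₀*(2/(1-κ₂/κ₁)+6)) * ((p/(p-κ₁))^(1-κ₂/κ₁) * ψ p) := by
    have h1 := mul_le_mul_of_nonneg_right NB hψ0
    calc (n:ℝ)^(1/p) * ((2:ℝ)^(-(K:ℝ)) * ψ p)
        + (∑ j ∈ Finset.range K, (((F (j+1)).card:ℝ))^(1/p) * ((2:ℝ)^(-(j:ℝ)) * ψ p))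
        + (((F 0).card:ℝ))^(1/p) * ψ p
        = ((n:ℝ)^(1/p) * (2:ℝ)^(-(K:ℝ))
            + (∑ j ∈ Finset.range K, (((F (j+1)).card:ℝ))^(1/p) * (2:ℝ)^(-(j:ℝ)))
            + (((F 0).card:ℝ))^(1/p)) * ψ p := by
          rw [add_mul, add_mul, Finset.sum_mul]
          simp only [mul_assoc]
      _ ≤ ((1 + C₀ + 6*C₀*(2/(1-κ₂/κ₁)+6)) * (p/(p-κ₁))^(1-κ₂/κ₁)) * ψ p := h1
      _ = (1 + C₀ + 6*C₀*(2/(1-κ₂/κ₁)+6)) * ((p/(p-κ₁))^(1-κ₂/κ₁) * ψ p) := by ring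
  have hA0 : (0:ℝ) ≤ (n:ℝ)^(1/p) * ((2:ℝ)^(-(K:ℝ)) * ψ p) :=
    mul_nonneg (Real.rpow_nonneg (Nat.cast_nonneg n) _)
      (mul_nonneg (Real.rpow_nonneg (by norm_num) _) hψ0)
  have hB0 : ∀ j ∈ Finset.range K,
      (0:ℝ) ≤ (((F (j+1)).card:ℝ))^(1/p) * ((2:ℝ)^(-(j:ℝ)) * ψ p) := fun j _ =>
    mul_nonneg (Real.rpow_nonneg (Nat.cast_nonneg _) _)
      (mul_nonneg (Real.rpow_nonneg (by norm_num) _) hψ0)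
  have hS0 : (0:ℝ) ≤ ∑ j ∈ Finset.range K,
      (((F (j+1)).card:ℝ))^(1/p) * ((2:ℝ)^(-(j:ℝ)) * ψ p) := Finset.sum_nonneg hB0
  have hC00 : (0:ℝ) ≤ (((F 0).card:ℝ))^(1/p) * ψ p :=
    mul_nonneg (Real.rpow_nonneg (Nat.cast_nonneg _) _) hψ0
  -- conclude
  apply ENNReal.div_le_of_le_mul
  rw [← ENNReal.ofReal_mul (by positivity : (0:ℝ) ≤ 1 + C₀ + 6*C₀*(2/(1-κ₂/κ₁)+6))]
  calc lpNorm μ (fun x => ⨆ t, Y t x) p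
      ≤ lpNorm μ TL p + (∑ j ∈ Finset.range K, lpNorm μ (HH (j+1)) p) + lpNorm μ H0 p := htri
    _ ≤ ENNReal.ofReal ((n:ℝ)^(1/p) * ((2:ℝ)^(-(K:ℝ)) * ψ p))
        + (∑ j ∈ Finset.range K,
            ENNReal.ofReal ((((F (j+1)).card:ℝ))^(1/p) * ((2:ℝ)^(-(j:ℝ)) * ψ p)))
        + ENNReal.ofReal ((((F 0).card:ℝ))^(1/p) * ψ p) :=
        add_le_add (add_le_add hTLb (Finset.sum_le_sum fun j _ => hHb j)) hH0b
    _ = ENNReal.ofReal ((n:ℝ)^(1/p) * ((2:ℝ)^(-(K:ℝ)) * ψ p)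
        + (∑ j ∈ Finset.range K, (((F (j+1)).card:ℝ))^(1/p) * ((2:ℝ)^(-(j:ℝ)) * ψ p))
        + (((F 0).card:ℝ))^(1/p) * ψ p) := by
        rw [← ENNReal.ofReal_sum_of_nonneg hB0, ← ENNReal.ofReal_add hA0 hS0,
          ← ENNReal.ofReal_add (add_nonneg hA0 hS0) hC00]
    _ ≤ ENNReal.ofReal ((1 + C₀ + 6*C₀*(2/(1-κ₂/κ₁)+6))
        * ((p/(p-κ₁))^(1-κ₂/κ₁) * ψ p)) := ENNReal.ofReal_le_ofReal hreal
end
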